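/- For real parameters θ¹, θ² with θ¹+θ² > 0 and θ¹−θ² > 0, the variance of log(sech X) under the beta-logistic distribution is ∫_{ℝ} (log(sech x) − m)² · p(x;θ¹,θ²) dx = (1/4)ψ'((θ¹+θ²)/2) + (1/4)ψ'((θ¹−θ²)/2) − ψ'(θ¹), where m = (1/2)ψ((θ¹−θ²)/2) + (1/2)ψ((θ¹+θ²)/2) − ψ(θ¹) + log 2. This is the (1,1) entry g₁₁ of the Fisher information matrix of the family. -/

import Mathlib

open MeasureTheory Set

/-- The hyperbolic secant function: `sech x = 2 / (eˣ + e⁻ˣ)`. -/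
noncomputable def sech (x : ℝ) : ℝ := 1 / Real.cosh x

/-- The beta-logistic density. -/
noncomputable def betaLogisticPDF (θ1 θ2 x : ℝ) : ℝ :=
  (2 : ℝ) ^ (1 - θ1) * sech x ^ θ1 * Real.exp (θ2 * x) /
    (Real.Gamma ((θ1 - θ2) / 2) * Real.Gamma ((θ1 + θ2) / 2) / Real.Gamma θ1)

/-- The digamma function `ψ(z) = d/dz log Γ(z)`. -/
noncomputable def digamma (z : ℝ) : ℝ := deriv (fun x => Real.log (Real.Gamma x)) z

/-- The trigamma function `ψ'(z) = d²/dz² log Γ(z)`. -/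
noncomputable def trigamma (z : ℝ) : ℝ := iteratedDeriv 2 (fun x => Real.log (Real.Gamma x)) z



lemma analyticAt_realGamma {x : ℝ} (hx : 0 < x) : AnalyticAt ℝ Real.Gamma x := by
  have hC : AnalyticAt ℂ Complex.Gamma (x : ℂ) := by
    apply DifferentiableOn.analyticAt (s := {z : ℂ | 0 < z.re})
    · intro z hz
      refine (Complex.differentiableAt_Gamma z fun m => ?_).differentiableWithinAt
      intro h
      rw [h] at hz
      simp only [mem_setOf_eq, Complex.neg_re, Complex.natCast_re] at hz
      have : (0:ℝ) ≤ m := Nat.cast_nonneg m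
      linarith
    · exact (isOpen_lt continuous_const Complex.continuous_re).mem_nhds (by simpa using hx)
  have h1 : AnalyticAt ℝ (fun y : ℝ => (Complex.Gamma (y : ℂ)).re) x :=
    (Complex.reCLM.analyticAt _).comp ((hC.restrictScalars).comp (Complex.ofRealCLM.analyticAt x))
  refine h1.congr (Filter.Eventually.of_forall fun y => ?_)
  simp only []
  rw [Complex.Gamma_ofReal, Complex.ofReal_re]

lemma contDiffOn_logGamma : ContDiffOn ℝ ⊤ (fun x => Real.log (Real.Gamma x)) (Ioi 0) := by
  intro x hx
  have hx0 : (0:ℝ) < x := hx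
  have hR : ContDiffAt ℝ ⊤ Real.Gamma x := (analyticAt_realGamma hx0).contDiffAt
  exact ((Real.contDiffAt_log.2 (Real.Gamma_pos_of_pos hx0).ne').comp x hR).contDiffWithinAt

lemma hasDerivAt_logGamma {z : ℝ} (hz : 0 < z) :
    HasDerivAt (fun x => Real.log (Real.Gamma x)) (digamma z) z := by
  have := (contDiffOn_logGamma.contDiffAt ((isOpen_Ioi).mem_nhds hz)).differentiableAt
    (by simp : (⊤ : WithTop ℕ∞) ≠ 0)
  exact this.hasDerivAt

lemma hasDerivAt_digamma {z : ℝ} (hz : 0 < z) :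
    HasDerivAt digamma (trigamma z) z := by
  have h1 : ContDiffOn ℝ ⊤ (deriv fun x => Real.log (Real.Gamma x)) (Ioi 0) :=
    contDiffOn_logGamma.deriv_of_isOpen isOpen_Ioi (le_top)
  have h2 := (h1.contDiffAt ((isOpen_Ioi).mem_nhds hz)).differentiableAt
    (by simp : (⊤ : WithTop ℕ∞) ≠ 0)
  have h3 : trigamma z = deriv (deriv fun x => Real.log (Real.Gamma x)) z := by
    rw [trigamma, iteratedDeriv_succ, iteratedDeriv_one]
  rw [h3]
  exact h2.hasDerivAt



lemma sech_pos (x : ℝ) : 0 < sech x := by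
  unfold sech; positivity

lemma sech_le_one (x : ℝ) : sech x ≤ 1 := by
  unfold sech
  rw [div_le_one (Real.cosh_pos x)]
  exact Real.one_le_cosh x

lemma cosh_le_exp_abs (x : ℝ) : Real.cosh x ≤ Real.exp |x| := by
  rw [Real.cosh_eq]
  have h1 : Real.exp x ≤ Real.exp |x| := Real.exp_le_exp.2 (le_abs_self x)
  have h2 : Real.exp (-x) ≤ Real.exp |x| := Real.exp_le_exp.2 (neg_le_abs x)
  linarith

lemma exp_abs_le_two_cosh (x : ℝ) : Real.exp |x| ≤ 2 * Real.cosh x := by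
  rw [Real.cosh_eq]
  rcases abs_choice x with h | h <;> rw [h] <;>
    [skip; skip] <;> nlinarith [Real.exp_pos x, Real.exp_pos (-x)]

lemma sech_le_two_exp (x : ℝ) : sech x ≤ 2 * Real.exp (-|x|) := by
  have h : Real.exp |x| / 2 ≤ Real.cosh x := by linarith [exp_abs_le_two_cosh x]
  have h2 := one_div_le_one_div_of_le (by positivity) h
  unfold sech
  rw [Real.exp_neg]
  calc 1 / Real.cosh x ≤ 1 / (Real.exp |x| / 2) := h2
  _ = 2 * (Real.exp |x|)⁻¹ := by rw [one_div_div, div_eq_mul_inv]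

lemma exp_neg_abs_le_sech (x : ℝ) : Real.exp (-|x|) ≤ sech x := by
  unfold sech
  rw [Real.exp_neg, inv_eq_one_div, div_le_div_iff₀ (Real.exp_pos _) (Real.cosh_pos x)]
  nlinarith [cosh_le_exp_abs x]

lemma continuous_sech : Continuous sech :=
  continuous_const.div Real.continuous_cosh fun x => (Real.cosh_pos (x := x)).ne'

lemma continuous_log_sech : Continuous fun x => Real.log (sech x) :=
  continuous_sech.log fun x => (sech_pos x).ne'

lemma abs_log_sech_le (x : ℝ) : |Real.log (sech x)| ≤ |x| := by
  have h1 : Real.log (sech x) ≤ 0 := Real.log_nonpos (sech_pos x).le (sech_le_one x)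
  have h2 : -|x| ≤ Real.log (sech x) := by
    calc -|x| = Real.log (Real.exp (-|x|)) := (Real.log_exp _).symm
    _ ≤ Real.log (sech x) := Real.log_le_log (Real.exp_pos _) (exp_neg_abs_le_sech x)
  rw [abs_le]
  constructor
  · exact h2
  · linarith [abs_nonneg x]

lemma integrable_abs_pow_mul_exp_neg {ε : ℝ} (hε : 0 < ε) (n : ℕ) :
    Integrable (fun x : ℝ => |x| ^ n * Real.exp (-(ε * |x|))) := by
  have hIoi : IntegrableOn (fun x : ℝ => |x| ^ n * Real.exp (-(ε * |x|))) (Ioi 0) := by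
    have := integrableOn_rpow_mul_exp_neg_mul_rpow (s := (n : ℝ)) (p := 1)
      (by exact_mod_cast neg_one_lt_zero.trans_le (Nat.cast_nonneg n)) one_pos hε
    apply this.congr_fun ?_ measurableSet_Ioi
    intro x hx
    have hx0 : (0:ℝ) < x := hx
    dsimp only
    rw [Real.rpow_natCast, Real.rpow_one, abs_of_pos hx0, neg_mul]
  have hIic : IntegrableOn (fun x : ℝ => |x| ^ n * Real.exp (-(ε * |x|))) (Iic 0) := by
    have hIci : IntegrableOn (fun x : ℝ => |x| ^ n * Real.exp (-(ε * |x|))) (Ici 0) := by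
      rwa [integrableOn_Ici_iff_integrableOn_Ioi]
    refine (MeasurePreserving.integrableOn_comp_preimage (Measure.measurePreserving_neg volume)
      (Homeomorph.neg ℝ).measurableEmbedding).1 ?_
    have hpre : (Neg.neg ⁻¹' Iic (0:ℝ) : Set ℝ) = Ici 0 := by ext y; simp
    rw [hpre]
    exact hIci.congr_fun (fun x _ => by simp [Function.comp, abs_neg]) measurableSet_Ici
  have : IntegrableOn (fun x : ℝ => |x| ^ n * Real.exp (-(ε * |x|))) (Iic 0 ∪ Ioi 0) :=
    hIic.union hIoi
  rwa [Iic_union_Ioi, integrableOn_univ] at this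

lemma integrable_abspow {θ2 a : ℝ} (ha : |θ2| < a) (n : ℕ) :
    Integrable (fun x : ℝ => |x| ^ n * (sech x ^ a * Real.exp (θ2 * x))) := by
  have ha0 : 0 < a := (abs_nonneg θ2).trans_lt ha
  have hcont : Continuous (fun x : ℝ => |x| ^ n * (sech x ^ a * Real.exp (θ2 * x))) := by
    apply ((continuous_abs.pow n)).mul
    exact ((continuous_sech.rpow_const fun x => Or.inl (sech_pos x).ne').mul
      (Real.continuous_exp.comp (continuous_const.mul continuous_id)))
  apply Integrable.mono' (((integrable_abs_pow_mul_exp_neg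
    (sub_pos.2 ha) n).const_mul ((2:ℝ) ^ a)).const_mul 1) hcont.aestronglyMeasurable
  refine Filter.Eventually.of_forall fun x => ?_
  have hs := sech_pos x
  have h1 : ‖|x| ^ n * (sech x ^ a * Real.exp (θ2 * x))‖
      = |x| ^ n * (sech x ^ a * Real.exp (θ2 * x)) := by
    rw [norm_mul, norm_pow, Real.norm_eq_abs, Real.norm_eq_abs, abs_abs,
      abs_of_pos (by positivity : (0:ℝ) < sech x ^ a * Real.exp (θ2 * x))]
  rw [h1]
  have h2 : sech x ^ a ≤ 2 ^ a * Real.exp (-(a * |x|)) := by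
    calc sech x ^ a ≤ (2 * Real.exp (-|x|)) ^ a :=
      Real.rpow_le_rpow hs.le (sech_le_two_exp x) ha0.le
    _ = 2 ^ a * Real.exp (-|x|) ^ a := Real.mul_rpow (by norm_num) (Real.exp_pos _).le
    _ = 2 ^ a * Real.exp (-(a * |x|)) := by
      rw [← Real.exp_mul]; ring_nf
  have h3 : Real.exp (θ2 * x) ≤ Real.exp (|θ2| * |x|) :=
    Real.exp_le_exp.2 ((le_abs_self _).trans (abs_mul θ2 x).le)
  calc |x| ^ n * (sech x ^ a * Real.exp (θ2 * x))
      ≤ |x| ^ n * (2 ^ a * Real.exp (-(a * |x|)) * Real.exp (|θ2| * |x|)) := by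
        apply mul_le_mul_of_nonneg_left ?_ (by positivity)
        exact mul_le_mul h2 h3 (Real.exp_pos _).le (by positivity)
    _ = 1 * ((2:ℝ) ^ a * (|x| ^ n * Real.exp (-((a - |θ2|) * |x|)))) := by
        have he : -(a * |x|) + |θ2| * |x| = -((a - |θ2|) * |x|) := by ring
        rw [mul_assoc, ← Real.exp_add, he]; ring

lemma integrable_main {θ2 a : ℝ} (ha : |θ2| < a) (n : ℕ) :
    Integrable (fun x : ℝ => Real.log (sech x) ^ n * (sech x ^ a * Real.exp (θ2 * x))) := by
  have hcont : Continuous (fun x : ℝ => Real.log (sech x) ^ n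
      * (sech x ^ a * Real.exp (θ2 * x))) := by
    apply (continuous_log_sech.pow n).mul
    exact ((continuous_sech.rpow_const fun x => Or.inl (sech_pos x).ne').mul
      (Real.continuous_exp.comp (continuous_const.mul continuous_id)))
  apply Integrable.mono' (integrable_abspow ha n) hcont.aestronglyMeasurable
  refine Filter.Eventually.of_forall fun x => ?_
  have hs := sech_pos x
  have h1 : ‖Real.log (sech x) ^ n * (sech x ^ a * Real.exp (θ2 * x))‖
      = |Real.log (sech x)| ^ n * (sech x ^ a * Real.exp (θ2 * x)) := by
    rw [norm_mul, norm_pow, Real.norm_eq_abs, Real.norm_eq_abs,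
      abs_of_pos (by positivity : (0:ℝ) < sech x ^ a * Real.exp (θ2 * x))]
  rw [h1]
  exact mul_le_mul_of_nonneg_right
    (pow_le_pow_left₀ (abs_nonneg _) (abs_log_sech_le x) n) (by positivity)



section logit
variable {u : ℝ}

noncomputable def logit (u : ℝ) : ℝ := (1/2) * (Real.log u - Real.log (1-u))

lemma hasDerivAt_logit (h0 : 0 < u) (h1 : u < 1) :
    HasDerivAt logit (1 / (2 * (u * (1-u)))) u := by
  have h1u : 0 < 1 - u := by linarith
  have d1 : HasDerivAt (fun v : ℝ => Real.log v) u⁻¹ u := Real.hasDerivAt_log h0.ne'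
  have d2 : HasDerivAt (fun v : ℝ => Real.log (1-v)) (-(1-u)⁻¹) u := by
    have dlin : HasDerivAt (fun v : ℝ => 1 - v) (-1) u := by
      simpa using (hasDerivAt_id u).const_sub 1
    exact ((Real.hasDerivAt_log h1u.ne').comp u dlin).congr_deriv (by ring)
  have := ((d1.sub d2).const_mul (1/2 : ℝ))
  refine this.congr_deriv ?_
  field_simp
  ring

lemma exp_logit (h0 : 0 < u) (h1 : u < 1) :
    Real.exp (logit u) = u ^ ((1:ℝ)/2) / (1-u) ^ ((1:ℝ)/2) := by
  have h1u : 0 < 1 - u := by linarith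
  rw [logit, mul_sub, Real.exp_sub, Real.rpow_def_of_pos h0, Real.rpow_def_of_pos h1u]
  ring_nf

lemma sech_logit (h0 : 0 < u) (h1 : u < 1) :
    sech (logit u) = 2 * (u ^ ((1:ℝ)/2) * (1-u) ^ ((1:ℝ)/2)) := by
  have h1u : 0 < 1 - u := by linarith
  set A := u ^ ((1:ℝ)/2) with hA
  set B := (1-u) ^ ((1:ℝ)/2) with hB
  have hA0 : 0 < A := Real.rpow_pos_of_pos h0 _
  have hB0 : 0 < B := Real.rpow_pos_of_pos h1u _
  have hA2 : A * A = u := by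
    rw [hA, ← Real.rpow_add h0]; norm_num
  have hB2 : B * B = 1 - u := by
    rw [hB, ← Real.rpow_add h1u]; norm_num
  have hexp : Real.exp (logit u) = A / B := exp_logit h0 h1
  have hexpneg : Real.exp (-logit u) = B / A := by
    rw [Real.exp_neg, hexp, inv_div]
  rw [sech, Real.cosh_eq, hexp, hexpneg]
  rw [div_add_div _ _ hB0.ne' hA0.ne']
  rw [show A * A + B * B = 1 by rw [hA2, hB2]; ring]
  field_simp

lemma exp_mul_logit (θ2 : ℝ) (h0 : 0 < u) (h1 : u < 1) :
    Real.exp (θ2 * logit u) = u ^ (θ2/2) * (1-u) ^ (-(θ2/2)) := by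
  have h1u : 0 < 1 - u := by linarith
  have harg : θ2 * logit u = Real.log u * (θ2/2) + Real.log (1-u) * (-(θ2/2)) := by
    rw [logit]; ring
  rw [harg, Real.exp_add, Real.rpow_def_of_pos h0, Real.rpow_def_of_pos h1u]

lemma logit_image : logit '' Ioo (0:ℝ) 1 = univ := by
  apply eq_univ_of_forall
  intro x
  have hden : 0 < 1 + Real.exp (-(2*x)) := by positivity
  refine ⟨1 / (1 + Real.exp (-(2*x))), ⟨by positivity, ?_⟩, ?_⟩
  · rw [div_lt_one hden]
    have := Real.exp_pos (-(2*x))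
    linarith
  · set u := 1 / (1 + Real.exp (-(2*x))) with hu
    have h1u : 1 - u = Real.exp (-(2*x)) / (1 + Real.exp (-(2*x))) := by
      rw [hu]; field_simp; ring
    have hu0 : 0 < u := by rw [hu]; positivity
    rw [logit, h1u, hu, Real.log_div one_ne_zero hden.ne',
      Real.log_div (Real.exp_pos _).ne' hden.ne', Real.log_exp, Real.log_one]
    ring

lemma logit_injOn : InjOn logit (Ioo (0:ℝ) 1) := by
  have : StrictMonoOn logit (Ioo (0:ℝ) 1) := by
    apply StrictMonoOn.mono (s := Ioo (0:ℝ) 1) ?_ (le_refl _)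
    apply strictMonoOn_of_deriv_pos (convex_Ioo _ _)
      (fun x hx => (hasDerivAt_logit hx.1 hx.2).continuousAt.continuousWithinAt)
    intro x hx
    rw [interior_Ioo] at hx
    rw [(hasDerivAt_logit hx.1 hx.2).deriv]
    have : 0 < 1 - x := by linarith [hx.2]
    exact div_pos one_pos (by nlinarith [hx.1])
  exact this.injOn

end logit

lemma real_beta {b c : ℝ} (hb : 0 < b) (hc : 0 < c) :
    ∫ u in Ioo (0:ℝ) 1, u ^ (b-1) * (1-u) ^ (c-1) =
      Real.Gamma b * Real.Gamma c / Real.Gamma (b+c) := by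
  have hcplx := Complex.Gamma_mul_Gamma_eq_betaIntegral (s := (b:ℂ)) (t := (c:ℂ))
    (by simpa using hb) (by simpa using hc)
  have hbeta : Complex.betaIntegral b c =
      ((∫ u in (0:ℝ)..1, u ^ (b-1) * (1-u) ^ (c-1) : ℝ) : ℂ) := by
    rw [Complex.betaIntegral, ← intervalIntegral.integral_ofReal]
    apply intervalIntegral.integral_congr
    intro x hx
    rw [uIcc_of_le (by norm_num : (0:ℝ) ≤ 1)] at hx
    obtain ⟨hx0, hx1⟩ := hx
    push_cast
    rw [Complex.ofReal_cpow hx0, Complex.ofReal_cpow (by linarith : (0:ℝ) ≤ 1 - x)]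
    push_cast
    ring
  rw [hbeta, show ((b:ℂ) + c) = ((b+c : ℝ) : ℂ) by push_cast; ring, Complex.Gamma_ofReal,
    Complex.Gamma_ofReal, Complex.Gamma_ofReal, ← Complex.ofReal_mul, ← Complex.ofReal_mul,
    Complex.ofReal_inj] at hcplx
  have hG : Real.Gamma (b+c) ≠ 0 := (Real.Gamma_pos_of_pos (by linarith)).ne'
  rw [intervalIntegral.integral_of_le zero_le_one, integral_Ioc_eq_integral_Ioo] at hcplx
  rw [eq_div_iff hG]
  linarith [hcplx]

lemma key_pointwise {θ2 a u : ℝ} (h0 : 0 < u) (h1 : u < 1) :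
    |1 / (2 * (u * (1-u)))| • (sech (logit u) ^ a * Real.exp (θ2 * logit u)) =
      2 ^ (a-1) * (u ^ ((a+θ2)/2 - 1) * (1-u) ^ ((a-θ2)/2 - 1)) := by
  have h1u : 0 < 1 - u := by linarith
  rw [smul_eq_mul, sech_logit h0 h1, exp_mul_logit θ2 h0 h1,
    abs_of_pos (by positivity : (0:ℝ) < 1 / (2 * (u * (1-u)))),
    Real.mul_rpow (by norm_num) (by positivity),
    Real.mul_rpow (Real.rpow_nonneg h0.le _) (Real.rpow_nonneg h1u.le _),
    ← Real.rpow_mul h0.le, ← Real.rpow_mul h1u.le,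
    show (a+θ2)/2 - 1 = 1/2 * a + (θ2/2 + (-1)) by ring,
    show (a-θ2)/2 - 1 = 1/2 * a + (-(θ2/2) + (-1)) by ring,
    Real.rpow_add h0, Real.rpow_add h0, Real.rpow_add h1u, Real.rpow_add h1u,
    Real.rpow_neg_one, Real.rpow_neg_one,
    show a - 1 = a + (-1) by ring, Real.rpow_add (by norm_num : (0:ℝ) < 2),
    Real.rpow_neg_one]
  have hu2 : u ^ (θ2/2) ≠ 0 := (Real.rpow_pos_of_pos h0 _).ne'
  have hu2' : (1-u) ^ (-(θ2/2)) ≠ 0 := (Real.rpow_pos_of_pos h1u _).ne'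
  field_simp

lemma integral_sech_rpow {θ2 a : ℝ} (ha : |θ2| < a) :
    ∫ x : ℝ, sech x ^ a * Real.exp (θ2 * x) =
      2 ^ (a-1) * (Real.Gamma ((a-θ2)/2) * Real.Gamma ((a+θ2)/2) / Real.Gamma a) := by
  have ha0 : 0 < a := (abs_nonneg θ2).trans_lt ha
  have hb : 0 < (a+θ2)/2 := by rcases abs_lt.1 ha with ⟨h, _⟩; linarith
  have hc : 0 < (a-θ2)/2 := by rcases abs_lt.1 ha with ⟨_, h⟩; linarith
  have hchange := integral_image_eq_integral_abs_deriv_smul measurableSet_Ioo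
    (fun u hu => (hasDerivAt_logit hu.1 hu.2).hasDerivWithinAt)
    logit_injOn (fun x => sech x ^ a * Real.exp (θ2 * x))
  rw [logit_image, setIntegral_univ] at hchange
  rw [hchange]
  rw [setIntegral_congr_fun measurableSet_Ioo
    (fun u hu => key_pointwise (θ2 := θ2) (a := a) hu.1 hu.2)]
  rw [MeasureTheory.integral_const_mul]
  have hsum : (a+θ2)/2 + (a-θ2)/2 = a := by ring
  rw [show (∫ u in Ioo (0:ℝ) 1, u ^ ((a+θ2)/2 - 1) * (1-u) ^ ((a-θ2)/2 - 1)) =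
      Real.Gamma ((a+θ2)/2) * Real.Gamma ((a-θ2)/2) / Real.Gamma ((a+θ2)/2 + (a-θ2)/2)
      from real_beta hb hc, hsum]
  ring



noncomputable def J (θ2 : ℝ) (k : ℕ) (t : ℝ) : ℝ :=
  ∫ x : ℝ, Real.log (sech x) ^ k * (sech x ^ t * Real.exp (θ2 * x))

lemma cont_integrand (θ2 s : ℝ) (k : ℕ) :
    Continuous fun x : ℝ => Real.log (sech x) ^ k * (sech x ^ s * Real.exp (θ2 * x)) := by
  apply (continuous_log_sech.pow k).mul
  exact (continuous_sech.rpow_const fun x => Or.inl (sech_pos x).ne').mul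
    (Real.continuous_exp.comp (continuous_const.mul continuous_id))

lemma hasDerivAt_J {θ2 t : ℝ} (ht : |θ2| < t) (k : ℕ) :
    HasDerivAt (J θ2 k) (J θ2 (k+1) t) t := by
  set ε := (t - |θ2|) / 2 with hε
  have hε0 : 0 < ε := by rw [hε]; linarith
  have htε : |θ2| < t - ε := by rw [hε]; linarith
  have key := hasDerivAt_integral_of_dominated_loc_of_deriv_le (μ := volume) (x₀ := t)
    (F := fun s x => Real.log (sech x) ^ k * (sech x ^ s * Real.exp (θ2 * x)))
    (F' := fun s x => Real.log (sech x) ^ (k+1) * (sech x ^ s * Real.exp (θ2 * x)))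
    (bound := fun x => |x| ^ (k+1) * (sech x ^ (t-ε) * Real.exp (θ2 * x)))
    (Metric.ball_mem_nhds t hε0)
    (Filter.Eventually.of_forall fun s => (cont_integrand θ2 s k).aestronglyMeasurable)
    (integrable_main ht k)
    (cont_integrand θ2 t (k+1)).aestronglyMeasurable
    ?_ (integrable_abspow htε (k+1)) ?_
  · exact key.2
  · refine Filter.Eventually.of_forall fun x s hs => ?_
    have hsx := sech_pos x
    have h1 : ‖Real.log (sech x) ^ (k+1) * (sech x ^ s * Real.exp (θ2 * x))‖
        = |Real.log (sech x)| ^ (k+1) * (sech x ^ s * Real.exp (θ2 * x)) := by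
      rw [norm_mul, norm_pow, Real.norm_eq_abs, Real.norm_eq_abs,
        abs_of_pos (by positivity : (0:ℝ) < sech x ^ s * Real.exp (θ2 * x))]
    rw [h1]
    have hts : t - ε ≤ s := by
      have := Metric.mem_ball.1 hs
      rw [Real.dist_eq, abs_lt] at this
      linarith [this.1]
    have h2 : sech x ^ s ≤ sech x ^ (t-ε) :=
      Real.rpow_le_rpow_of_exponent_ge hsx (sech_le_one x) hts
    apply mul_le_mul (pow_le_pow_left₀ (abs_nonneg _) (abs_log_sech_le x) (k+1))
      (mul_le_mul_of_nonneg_right h2 (Real.exp_pos _).le) (by positivity) (by positivity)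
  · refine Filter.Eventually.of_forall fun x s _ => ?_
    have h := ((Real.hasStrictDerivAt_const_rpow (sech_pos x) s).hasDerivAt.mul_const
      (Real.exp (θ2 * x))).const_mul (Real.log (sech x) ^ k)
    refine h.congr_deriv ?_
    ring

noncomputable def Gfun (θ2 t : ℝ) : ℝ :=
  2 ^ (t-1) * (Real.Gamma ((t-θ2)/2) * Real.Gamma ((t+θ2)/2) / Real.Gamma t)

noncomputable def Dfun (θ2 t : ℝ) : ℝ :=
  Real.log 2 + (1/2) * digamma ((t-θ2)/2) + (1/2) * digamma ((t+θ2)/2) - digamma t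

lemma J0_eq {θ2 t : ℝ} (ht : |θ2| < t) : J θ2 0 t = Gfun θ2 t := by
  unfold J Gfun
  simp only [pow_zero, one_mul]
  exact integral_sech_rpow ht

lemma aux_pos {θ2 t : ℝ} (ht : |θ2| < t) :
    0 < t ∧ 0 < (t-θ2)/2 ∧ 0 < (t+θ2)/2 := by
  rcases abs_lt.1 ht with ⟨h1, h2⟩
  exact ⟨(abs_nonneg θ2).trans_lt ht, by linarith, by linarith⟩

lemma Gfun_pos {θ2 t : ℝ} (ht : |θ2| < t) : 0 < Gfun θ2 t := by
  obtain ⟨h0, hc, hb⟩ := aux_pos ht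
  have g1 := Real.Gamma_pos_of_pos h0
  have g2 := Real.Gamma_pos_of_pos hc
  have g3 := Real.Gamma_pos_of_pos hb
  unfold Gfun
  positivity

lemma Gfun_eq_exp {θ2 t : ℝ} (ht : |θ2| < t) :
    Gfun θ2 t = Real.exp ((t-1) * Real.log 2 + Real.log (Real.Gamma ((t-θ2)/2))
      + Real.log (Real.Gamma ((t+θ2)/2)) - Real.log (Real.Gamma t)) := by
  obtain ⟨h0, hc, hb⟩ := aux_pos ht
  have g1 := Real.Gamma_pos_of_pos h0
  have g2 := Real.Gamma_pos_of_pos hc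
  have g3 := Real.Gamma_pos_of_pos hb
  rw [Gfun, sub_eq_add_neg ((t-1) * Real.log 2 + _ + _), Real.exp_add, Real.exp_add,
    Real.exp_add, Real.exp_log g2, Real.exp_log g3, Real.exp_neg, Real.exp_log g1,
    Real.rpow_def_of_pos (by norm_num : (0:ℝ) < 2)]
  rw [div_eq_mul_inv, mul_comm (Real.log 2) (t-1)]
  ring

lemma hasDerivAt_Hf {θ2 t : ℝ} (ht : |θ2| < t) :
    HasDerivAt (fun s => (s-1) * Real.log 2 + Real.log (Real.Gamma ((s-θ2)/2))
      + Real.log (Real.Gamma ((s+θ2)/2)) - Real.log (Real.Gamma s)) (Dfun θ2 t) t := by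
  obtain ⟨h0, hc, hb⟩ := aux_pos ht
  have d1 : HasDerivAt (fun s : ℝ => (s-1) * Real.log 2) (Real.log 2) t := by
    simpa using ((hasDerivAt_id t).sub_const 1).mul_const (Real.log 2)
  have i2 : HasDerivAt (fun s : ℝ => (s-θ2)/2) (1/2 : ℝ) t := by
    simpa using ((hasDerivAt_id t).sub_const θ2).div_const 2
  have i3 : HasDerivAt (fun s : ℝ => (s+θ2)/2) (1/2 : ℝ) t := by
    simpa using ((hasDerivAt_id t).add_const θ2).div_const 2
  have d2 : HasDerivAt (fun s : ℝ => Real.log (Real.Gamma ((s-θ2)/2)))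
      (digamma ((t-θ2)/2) * (1/2)) t := by
      have := (hasDerivAt_logGamma hc).comp t i2; exact this
  have d3 : HasDerivAt (fun s : ℝ => Real.log (Real.Gamma ((s+θ2)/2)))
      (digamma ((t+θ2)/2) * (1/2)) t := by
      have := (hasDerivAt_logGamma hb).comp t i3; exact this
  have d4 : HasDerivAt (fun s : ℝ => Real.log (Real.Gamma s)) (digamma t) t :=
    hasDerivAt_logGamma h0
  have h := ((d1.add d2).add d3).sub d4
  refine h.congr_deriv ?_
  unfold Dfun
  ring

lemma hasDerivAt_Gfun {θ2 t : ℝ} (ht : |θ2| < t) :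
    HasDerivAt (Gfun θ2) (Dfun θ2 t * Gfun θ2 t) t := by
  have hexp := (hasDerivAt_Hf ht).exp
  have hev : (fun s => Real.exp ((s-1) * Real.log 2 + Real.log (Real.Gamma ((s-θ2)/2))
      + Real.log (Real.Gamma ((s+θ2)/2)) - Real.log (Real.Gamma s))) =ᶠ[nhds t] Gfun θ2 := by
    filter_upwards [(isOpen_Ioi (a := |θ2|)).mem_nhds ht] with s hs
    exact (Gfun_eq_exp hs).symm
  have h := hexp.congr_of_eventuallyEq hev.symm
  rw [← Gfun_eq_exp ht] at h
  refine h.congr_deriv ?_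
  ring

noncomputable def Tfun (θ2 t : ℝ) : ℝ :=
  (1/4) * trigamma ((t-θ2)/2) + (1/4) * trigamma ((t+θ2)/2) - trigamma t

lemma hasDerivAt_Dfun {θ2 t : ℝ} (ht : |θ2| < t) :
    HasDerivAt (Dfun θ2) (Tfun θ2 t) t := by
  obtain ⟨h0, hc, hb⟩ := aux_pos ht
  have i2 : HasDerivAt (fun s : ℝ => (s-θ2)/2) (1/2 : ℝ) t := by
    simpa using ((hasDerivAt_id t).sub_const θ2).div_const 2
  have i3 : HasDerivAt (fun s : ℝ => (s+θ2)/2) (1/2 : ℝ) t := by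
    simpa using ((hasDerivAt_id t).add_const θ2).div_const 2
  have d2 : HasDerivAt (fun s : ℝ => digamma ((s-θ2)/2))
      (trigamma ((t-θ2)/2) * (1/2)) t := (hasDerivAt_digamma hc).comp t i2
  have d3 : HasDerivAt (fun s : ℝ => digamma ((s+θ2)/2))
      (trigamma ((t+θ2)/2) * (1/2)) t := (hasDerivAt_digamma hb).comp t i3
  have d4 : HasDerivAt digamma (trigamma t) t := hasDerivAt_digamma h0
  have h := (((hasDerivAt_const t (Real.log 2)).add (d2.const_mul (1/2 : ℝ))).add
    (d3.const_mul (1/2 : ℝ))).sub d4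
  refine h.congr_deriv ?_
  unfold Tfun
  ring

lemma eventually_mem_S {θ2 t : ℝ} (ht : |θ2| < t) : ∀ᶠ s in nhds t, |θ2| < s :=
  (isOpen_Ioi (a := |θ2|)).mem_nhds ht

lemma J1_eq {θ2 t : ℝ} (ht : |θ2| < t) : J θ2 1 t = Dfun θ2 t * Gfun θ2 t := by
  have h1 : HasDerivAt (J θ2 0) (J θ2 1 t) t := hasDerivAt_J ht 0
  have hev : Gfun θ2 =ᶠ[nhds t] J θ2 0 := by
    filter_upwards [eventually_mem_S ht] with s hs
    exact (J0_eq hs).symm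
  have h2 : HasDerivAt (J θ2 0) (Dfun θ2 t * Gfun θ2 t) t :=
    (hasDerivAt_Gfun ht).congr_of_eventuallyEq hev.symm
  exact h1.unique h2

lemma J2_eq {θ2 t : ℝ} (ht : |θ2| < t) :
    J θ2 2 t = Tfun θ2 t * Gfun θ2 t + Dfun θ2 t * (Dfun θ2 t * Gfun θ2 t) := by
  have h1 : HasDerivAt (J θ2 1) (J θ2 2 t) t := hasDerivAt_J ht 1
  have hev : (fun s => Dfun θ2 s * Gfun θ2 s) =ᶠ[nhds t] J θ2 1 := by
    filter_upwards [eventually_mem_S ht] with s hs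
    exact (J1_eq hs).symm
  have h2 : HasDerivAt (J θ2 1)
      (Tfun θ2 t * Gfun θ2 t + Dfun θ2 t * (Dfun θ2 t * Gfun θ2 t)) t :=
    (((hasDerivAt_Dfun ht).mul (hasDerivAt_Gfun ht)).congr_of_eventuallyEq hev.symm)
  exact h1.unique h2


/-- The variance of `log(sech X)` under the beta-logistic distribution is
`(1/4)ψ'((θ¹+θ²)/2) + (1/4)ψ'((θ¹−θ²)/2) − ψ'(θ¹)`, where
`m = (1/2)ψ((θ¹−θ²)/2) + (1/2)ψ((θ¹+θ²)/2) − ψ(θ¹) + log 2`.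
This is the Fisher metric entry `g₁₁`. -/
theorem betaLogistic_variance_log_sech (θ1 θ2 m : ℝ) (h1 : 0 < θ1 + θ2) (h2 : 0 < θ1 - θ2)
    (hm : m = (1 / 2) * digamma ((θ1 - θ2) / 2) + (1 / 2) * digamma ((θ1 + θ2) / 2) -
      digamma θ1 + Real.log 2) :
    (∫ x : ℝ, (Real.log (sech x) - m) ^ 2 * betaLogisticPDF θ1 θ2 x) =
      (1 / 4) * trigamma ((θ1 + θ2) / 2) + (1 / 4) * trigamma ((θ1 - θ2) / 2) -
        trigamma θ1 := by
  have hθ : |θ2| < θ1 := abs_lt.2 ⟨by linarith, by linarith⟩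
  obtain ⟨h0, hc, hb⟩ := aux_pos hθ
  have g1 := Real.Gamma_pos_of_pos h0
  have g2 := Real.Gamma_pos_of_pos hc
  have g3 := Real.Gamma_pos_of_pos hb
  have hGpos := Gfun_pos hθ
  have hmD : m = Dfun θ2 θ1 := by rw [hm]; unfold Dfun; ring
  have hpdf : ∀ x, betaLogisticPDF θ1 θ2 x =
      sech x ^ θ1 * Real.exp (θ2 * x) * (Gfun θ2 θ1)⁻¹ := by
    intro x
    unfold betaLogisticPDF Gfun
    rw [show (1 - θ1) = -(θ1 - 1) by ring, Real.rpow_neg (by norm_num : (0:ℝ) ≤ 2)]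
    have h2pow : (0:ℝ) < (2:ℝ) ^ (θ1 - 1) := Real.rpow_pos_of_pos (by norm_num) _
    field_simp
  have hint : ∀ x, (Real.log (sech x) - m) ^ 2 * betaLogisticPDF θ1 θ2 x =
      (Real.log (sech x) ^ 2 * (sech x ^ θ1 * Real.exp (θ2 * x))
        + (-(2*m)) * (Real.log (sech x) ^ 1 * (sech x ^ θ1 * Real.exp (θ2 * x)))
        + (m^2) * (Real.log (sech x) ^ 0 * (sech x ^ θ1 * Real.exp (θ2 * x))))
        * (Gfun θ2 θ1)⁻¹ := by
    intro x
    rw [hpdf x]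
    ring
  simp only [hint]
  rw [MeasureTheory.integral_mul_const]
  have ha : Integrable (fun x : ℝ => Real.log (sech x) ^ 2 * (sech x ^ θ1 * Real.exp (θ2 * x))
      + -(2*m) * (Real.log (sech x) ^ 1 * (sech x ^ θ1 * Real.exp (θ2 * x)))) volume :=
    (integrable_main hθ 2).add ((integrable_main hθ 1).const_mul _)
  have hb' : Integrable (fun x : ℝ =>
      m^2 * (Real.log (sech x) ^ 0 * (sech x ^ θ1 * Real.exp (θ2 * x)))) volume :=
    (integrable_main hθ 0).const_mul _
  rw [MeasureTheory.integral_add ha hb',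
    MeasureTheory.integral_add (integrable_main hθ 2) ((integrable_main hθ 1).const_mul _),
    MeasureTheory.integral_const_mul, MeasureTheory.integral_const_mul]
  have e0 : (∫ x : ℝ, Real.log (sech x) ^ 0 * (sech x ^ θ1 * Real.exp (θ2 * x))) = Gfun θ2 θ1 :=
    J0_eq hθ
  have e1 : (∫ x : ℝ, Real.log (sech x) ^ 1 * (sech x ^ θ1 * Real.exp (θ2 * x)))
      = Dfun θ2 θ1 * Gfun θ2 θ1 := J1_eq hθ
  have e2 : (∫ x : ℝ, Real.log (sech x) ^ 2 * (sech x ^ θ1 * Real.exp (θ2 * x)))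
      = Tfun θ2 θ1 * Gfun θ2 θ1 + Dfun θ2 θ1 * (Dfun θ2 θ1 * Gfun θ2 θ1) := J2_eq hθ
  rw [e0, e1, e2, hmD]
  have hfinal : (Tfun θ2 θ1 * Gfun θ2 θ1 + Dfun θ2 θ1 * (Dfun θ2 θ1 * Gfun θ2 θ1)
      + -(2 * Dfun θ2 θ1) * (Dfun θ2 θ1 * Gfun θ2 θ1)
      + Dfun θ2 θ1 ^ 2 * Gfun θ2 θ1) * (Gfun θ2 θ1)⁻¹ = Tfun θ2 θ1 := by
    field_simp
    ring
  rw [hfinal]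
  unfold Tfun
  ring
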